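/- Let (K,J) be a 2-site. The class W_J of weak equivalences contains all identities and is closed under composition and under isomorphism of 1-arrows (condition BF2 of Pronk). -/

import Mathlib

open CategoryTheory Bicategory

universe w v u

variable {B : Type u} [Bicategory.{w, v} B]

/-- Postcomposition with a 1-morphism, as a functor between hom-categories. -/
@[simps] def Postcomp {a b : B} (q : a ⟶ b) (z : B) : (z ⟶ a) ⥤ (z ⟶ b) where
  obj h := h ≫ q
  map α := α ▷ q

/-- A 1-morphism is ff if all postcomposition functors are fully faithful. -/
def IsFF {a b : B} (q : a ⟶ b) : Prop :=
  ∀ z : B, (Postcomp q z).Full ∧ (Postcomp q z).Faithful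

/-- Internal equivalence in a bicategory. -/
def IsIntEquiv {a b : B} (f : a ⟶ b) : Prop :=
  ∃ g : b ⟶ a, Nonempty (f ≫ g ≅ 𝟙 a) ∧ Nonempty (g ≫ f ≅ 𝟙 b)

/-- A fully faithful singleton coverage on a 2-category; a 2-site. -/
structure TwoSite (B : Type u) [Bicategory.{w, v} B] where
  J : ∀ ⦃a b : B⦄, (a ⟶ b) → Prop
  id_mem : ∀ a : B, J (𝟙 a)
  comp_mem : ∀ ⦃a b c : B⦄ {f : a ⟶ b} {g : b ⟶ c}, J f → J g → J (f ≫ g)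
  square : ∀ ⦃u x y : B⦄ (q : u ⟶ x), J q → ∀ f : y ⟶ x,
    ∃ (v : B) (k : v ⟶ y) (h : v ⟶ u), J k ∧ Nonempty (h ≫ q ≅ k ≫ f)
  ff : ∀ ⦃a b : B⦄ {q : a ⟶ b}, J q → IsFF q

/-- A 1-arrow is J-locally split. -/
def LocallySplit (S : TwoSite B) {x y : B} (f : x ⟶ y) : Prop :=
  ∃ (u : B) (j : u ⟶ y), S.J j ∧ ∃ s : u ⟶ x, Nonempty (s ≫ f ≅ j)

/-- A weak equivalence: ff and J-locally split. -/
def WeakEquiv (S : TwoSite B) {x y : B} (f : x ⟶ y) : Prop :=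
  IsFF f ∧ LocallySplit S f

section Aux
variable {B : Type u} [Bicategory.{w, v} B]

lemma isFF_id (a : B) : IsFF (𝟙 a) := by
  intro z
  have e : Postcomp (𝟙 a) z ≅ 𝟭 (z ⟶ a) :=
    NatIso.ofComponents (fun h => rightUnitor h) (by intros; exact rightUnitor_naturality _)
  exact ⟨Functor.Full.of_iso (F := 𝟭 _) e.symm,
    Functor.Faithful.of_iso (F := 𝟭 _) e.symm⟩

lemma isFF_comp {a b c : B} {f : a ⟶ b} {g : b ⟶ c}
    (hf : IsFF f) (hg : IsFF g) : IsFF (f ≫ g) := by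
  intro z
  have e : Postcomp (f ≫ g) z ≅ Postcomp f z ⋙ Postcomp g z :=
    NatIso.ofComponents (fun h => (associator h f g).symm) (by intros; exact associator_inv_naturality_left _ _ _)
  haveI := (hf z).1; haveI := (hf z).2
  haveI := (hg z).1; haveI := (hg z).2
  exact ⟨Functor.Full.of_iso (F := Postcomp f z ⋙ Postcomp g z) e.symm,
    Functor.Faithful.of_iso (F := Postcomp f z ⋙ Postcomp g z) e.symm⟩

lemma isFF_of_iso {a b : B} {f g : a ⟶ b} (hf : IsFF f) (e : f ≅ g) :
    IsFF g := by
  intro z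
  have eN : Postcomp f z ≅ Postcomp g z :=
    NatIso.ofComponents (fun h => whiskerLeftIso h e)
      (by intros; exact (whisker_exchange _ _).symm)
  haveI := (hf z).1; haveI := (hf z).2
  exact ⟨Functor.Full.of_iso (F := Postcomp f z) eN,
    Functor.Faithful.of_iso (F := Postcomp f z) eN⟩

end Aux

/-- BF2 for the class of weak equivalences. -/
theorem weakEquiv_BF2 (S : TwoSite B) :
    (∀ a : B, WeakEquiv S (𝟙 a)) ∧
    (∀ ⦃a b c : B⦄ {f : a ⟶ b} {g : b ⟶ c},
      WeakEquiv S f → WeakEquiv S g → WeakEquiv S (f ≫ g)) ∧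
    (∀ ⦃a b : B⦄ {f g : a ⟶ b}, WeakEquiv S f → Nonempty (f ≅ g) →
      WeakEquiv S g) := by
  refine ⟨fun a => ⟨isFF_id a, a, 𝟙 a, S.id_mem a, 𝟙 a, ⟨leftUnitor _⟩⟩, ?_, ?_⟩
  · rintro a b c f g ⟨hff, v, jf, hjf, sf, ⟨ef⟩⟩ ⟨hgf, u, jg, hjg, sg, ⟨eg⟩⟩
    refine ⟨isFF_comp hff hgf, ?_⟩
    obtain ⟨w, k, h, hk, ⟨esq⟩⟩ := S.square jf hjf sg
    refine ⟨w, k ≫ jg, S.comp_mem hk hjg, h ≫ sf, ⟨?_⟩⟩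
    calc (h ≫ sf) ≫ f ≫ g ≅ ((h ≫ sf) ≫ f) ≫ g := (Bicategory.associator _ _ _).symm
      _ ≅ (h ≫ sf ≫ f) ≫ g := whiskerRightIso (Bicategory.associator _ _ _) g
      _ ≅ (h ≫ jf) ≫ g := whiskerRightIso (whiskerLeftIso h ef) g
      _ ≅ (k ≫ sg) ≫ g := whiskerRightIso esq g
      _ ≅ k ≫ sg ≫ g := Bicategory.associator _ _ _
      _ ≅ k ≫ jg := whiskerLeftIso k eg
  · rintro a b f g ⟨hff, u, j, hj, s, ⟨e⟩⟩ ⟨efg⟩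
    exact ⟨isFF_of_iso hff efg, u, j, hj, s, ⟨(whiskerLeftIso s efg).symm ≪≫ e⟩⟩
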